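/- For any graphs G and H of orders n_1 and n_2, n_1 n_2 / gp(G □ H) ≤ χ_gp(G □ H) ≤ min{ n_1 · χ_gp(H), n_2 · χ_gp(G) }. -/

import Mathlib

open SimpleGraph

/-- A set `S` is in general position: no shortest path contains more than two vertices of `S`. -/
def IsGenPosSet {V : Type*} (G : SimpleGraph V) (S : Set V) : Prop :=
  ∀ ⦃u v : V⦄ (p : G.Walk u v), p.IsPath → p.length = G.dist u v →
    ∀ x y z, x ∈ S → y ∈ S → z ∈ S →
      x ∈ p.support → y ∈ p.support → z ∈ p.support →
      x = y ∨ y = z ∨ x = z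

/-- `G` can be coloured with `k` colours so that every colour class is in general position. -/
def GpColorable {V : Type*} (G : SimpleGraph V) (k : ℕ) : Prop :=
  ∃ c : V → Fin k, ∀ i, IsGenPosSet G {v | c v = i}

/-- The gp-chromatic number: least number of colours in a colouring whose classes are
general position sets. -/
noncomputable def gpChromatic {V : Type*} (G : SimpleGraph V) : ℕ :=
  sInf {k | GpColorable G k}

/-- The general position number of `G`: largest size of a general position set. -/
noncomputable def gpNumber {V : Type*} (G : SimpleGraph V) : ℕ :=
  sSup {k | ∃ S : Set V, IsGenPosSet G S ∧ S.ncard = k}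

section Aux

open scoped Classical

/-- A walk whose length equals the distance between its endpoints is a path. -/
theorem isPath_of_length_eq_dist' {V : Type*} {G : SimpleGraph V} {u v : V}
    (p : G.Walk u v) (h : p.length = G.dist u v) : p.IsPath := by
  classical
  induction p with
  | nil => exact Walk.IsPath.nil
  | @cons u w v hadj q ih =>
    rw [Walk.length_cons] at h
    have hd : G.dist w v = q.length := by
      have h1 : G.dist w v ≤ q.length := dist_le q
      rcases h1.lt_or_eq with hlt | he
      · exfalso
        obtain ⟨r, hr⟩ := (Reachable.exists_walk_length_eq_dist ⟨q⟩ : _)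
        have : G.dist u v ≤ (Walk.cons hadj r).length := dist_le _
        rw [Walk.length_cons, hr] at this
        omega
      · exact he
    have hq : q.IsPath := ih (by omega)
    rw [Walk.cons_isPath_iff]
    refine ⟨hq, fun hu => ?_⟩
    have := dist_le (q.dropUntil u hu)
    have := Walk.length_dropUntil_le q hu
    omega

variable {α β : Type*} (G : SimpleGraph α) (H : SimpleGraph β)

/-- Projection of a walk in the box product to the first factor. -/
noncomputable def projG : ∀ {x y : α × β}, (G □ H).Walk x y → G.Walk x.1 y.1
  | _, _, Walk.nil => Walk.nil
  | x, _, Walk.cons (v := w) h q =>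
    if h' : G.Adj x.1 w.1 then Walk.cons h' (projG q)
    else (projG q).copy
      (((boxProd_adj.mp h).resolve_left (fun hc => h' hc.1)).2.symm) rfl

/-- Projection of a walk in the box product to the second factor. -/
noncomputable def projH : ∀ {x y : α × β}, (G □ H).Walk x y → H.Walk x.2 y.2
  | _, _, Walk.nil => Walk.nil
  | x, _, Walk.cons (v := w) h q =>
    if h' : H.Adj x.2 w.2 then Walk.cons h' (projH q)
    else (projH q).copy
      (((boxProd_adj.mp h).resolve_right (fun hc => h' hc.1)).2.symm) rfl

theorem length_proj_add {x y : α × β} (p : (G □ H).Walk x y) :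
    (projG G H p).length + (projH G H p).length = p.length := by
  induction p with
  | nil => rfl
  | @cons x w y h q ih =>
    rw [Walk.length_cons]
    by_cases h1 : G.Adj x.1 w.1
    · have h2 : ¬ H.Adj x.2 w.2 := by
        rcases boxProd_adj.mp h with ⟨_, he⟩ | ⟨_, he⟩
        · rw [he]; exact fun hc => hc.ne rfl
        · exact fun _ => (he ▸ h1).ne rfl
      rw [projG, projH, dif_pos h1, dif_neg h2]
      simp only [Walk.length_cons, Walk.length_copy]
      omega
    · have h2 : H.Adj x.2 w.2 := ((boxProd_adj.mp h).resolve_left (fun hc => h1 hc.1)).1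
      rw [projG, projH, dif_neg h1, dif_pos h2]
      simp only [Walk.length_cons, Walk.length_copy]
      omega

theorem fst_mem_support_projG {x y : α × β} (p : (G □ H).Walk x y) :
    ∀ z ∈ p.support, z.1 ∈ (projG G H p).support := by
  induction p with
  | nil =>
    intro z hz
    simp only [Walk.support_nil, List.mem_singleton] at hz
    subst hz; rw [projG]; simp
  | @cons x w y h q ih =>
    intro z hz
    rw [Walk.support_cons] at hz
    rcases List.mem_cons.mp hz with rfl | hz
    · by_cases h1 : G.Adj z.1 w.1
      · rw [projG, dif_pos h1]; simp
      · rw [projG, dif_neg h1, Walk.support_copy]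
        rw [← ((boxProd_adj.mp h).resolve_left (fun hc => h1 hc.1)).2.symm]
        exact Walk.start_mem_support _
    · by_cases h1 : G.Adj x.1 w.1
      · rw [projG, dif_pos h1, Walk.support_cons]
        exact List.mem_cons_of_mem _ (ih z hz)
      · rw [projG, dif_neg h1, Walk.support_copy]
        exact ih z hz

theorem snd_mem_support_projH {x y : α × β} (p : (G □ H).Walk x y) :
    ∀ z ∈ p.support, z.2 ∈ (projH G H p).support := by
  induction p with
  | nil =>
    intro z hz
    simp only [Walk.support_nil, List.mem_singleton] at hz
    subst hz; rw [projH]; simp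
  | @cons x w y h q ih =>
    intro z hz
    rw [Walk.support_cons] at hz
    rcases List.mem_cons.mp hz with rfl | hz
    · by_cases h1 : H.Adj z.2 w.2
      · rw [projH, dif_pos h1]; simp
      · rw [projH, dif_neg h1, Walk.support_copy]
        rw [← ((boxProd_adj.mp h).resolve_right (fun hc => h1 hc.1)).2.symm]
        exact Walk.start_mem_support _
    · by_cases h1 : H.Adj x.2 w.2
      · rw [projH, dif_pos h1, Walk.support_cons]
        exact List.mem_cons_of_mem _ (ih z hz)
      · rw [projH, dif_neg h1, Walk.support_copy]
        exact ih z hz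

variable {G H}

theorem proj_shortest {x y : α × β} (p : (G □ H).Walk x y)
    (hp : p.length = (G □ H).dist x y) :
    (projG G H p).length = G.dist x.1 y.1 ∧ (projH G H p).length = H.dist x.2 y.2 := by
  have d1 : G.dist x.1 y.1 ≤ (projG G H p).length := dist_le _
  have d2 : H.dist x.2 y.2 ≤ (projH G H p).length := dist_le _
  have hsum := length_proj_add G H p
  obtain ⟨q, hq⟩ := Reachable.exists_walk_length_eq_dist ⟨projG G H p⟩
  obtain ⟨r, hr⟩ := Reachable.exists_walk_length_eq_dist ⟨projH G H p⟩
  have hcomb : (G □ H).dist x y ≤ G.dist x.1 y.1 + H.dist x.2 y.2 := by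
    have := dist_le ((q.boxProdLeft H x.2).append (r.boxProdRight G y.1))
    have e : ((q.boxProdLeft H x.2).append (r.boxProdRight G y.1)).length = q.length + r.length :=
      (Walk.length_append _ _).trans (congrArg₂ (· + ·) (Walk.length_map _ _) (Walk.length_map _ _))
    rw [e, hq, hr] at this
    exact this
  constructor <;> omega

/-- A subset of a general position set is a general position set. -/
theorem IsGenPosSet.mono {V : Type*} {G : SimpleGraph V} {S T : Set V}
    (hST : S ⊆ T) (hT : IsGenPosSet G T) : IsGenPosSet G S :=
  fun _ _ p hp hl x y z hx hy hz => hT p hp hl x y z (hST hx) (hST hy) (hST hz)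

/-- A `G`-layer of a general position set of `G` is in general position in `G □ H`. -/
theorem isGenPosSet_layer_left {S : Set α} (hS : IsGenPosSet G S) (b0 : β) :
    IsGenPosSet (G □ H) {p : α × β | p.1 ∈ S ∧ p.2 = b0} := by
  intro u v p hp hlen x y z hx hy hz hxs hys hzs
  have hq := (proj_shortest p hlen).1
  have := hS (projG G H p) (isPath_of_length_eq_dist' _ hq) hq x.1 y.1 z.1
    hx.1 hy.1 hz.1 (fst_mem_support_projG G H p x hxs)
    (fst_mem_support_projG G H p y hys) (fst_mem_support_projG G H p z hzs)
  rcases this with h | h | h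
  · exact Or.inl (Prod.ext h (hx.2.trans hy.2.symm))
  · exact Or.inr (Or.inl (Prod.ext h (hy.2.trans hz.2.symm)))
  · exact Or.inr (Or.inr (Prod.ext h (hx.2.trans hz.2.symm)))

/-- An `H`-layer of a general position set of `H` is in general position in `G □ H`. -/
theorem isGenPosSet_layer_right {S : Set β} (hS : IsGenPosSet H S) (a0 : α) :
    IsGenPosSet (G □ H) {p : α × β | p.2 ∈ S ∧ p.1 = a0} := by
  intro u v p hp hlen x y z hx hy hz hxs hys hzs
  have hq := (proj_shortest p hlen).2
  have := hS (projH G H p) (isPath_of_length_eq_dist' _ hq) hq x.2 y.2 z.2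
    hx.1 hy.1 hz.1 (snd_mem_support_projH G H p x hxs)
    (snd_mem_support_projH G H p y hys) (snd_mem_support_projH G H p z hzs)
  rcases this with h | h | h
  · exact Or.inl (Prod.ext (hx.2.trans hy.2.symm) h)
  · exact Or.inr (Or.inl (Prod.ext (hy.2.trans hz.2.symm) h))
  · exact Or.inr (Or.inr (Prod.ext (hx.2.trans hz.2.symm) h))

/-- Any finite graph is gp-colourable with `card V` colours. -/
theorem gpColorable_card {V : Type*} [Fintype V] (G : SimpleGraph V) :
    GpColorable G (Fintype.card V) := by
  refine ⟨Fintype.equivFin V, fun i u v p hp hl x y z hx hy hz _ _ _ => ?_⟩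
  exact Or.inl ((Fintype.equivFin V).injective (hx.trans hy.symm))

theorem exists_gpColoring {V : Type*} [Fintype V] (G : SimpleGraph V) :
    GpColorable G (gpChromatic G) := by
  have h : {k | GpColorable G k}.Nonempty := ⟨Fintype.card V, gpColorable_card G⟩
  exact Nat.sInf_mem h

theorem ncard_le_gpNumber {V : Type*} [Fintype V] {G : SimpleGraph V} {S : Set V}
    (hS : IsGenPosSet G S) : S.ncard ≤ gpNumber G := by
  apply le_csSup
  · refine ⟨Fintype.card V, fun k hk => ?_⟩
    obtain ⟨T, _, rfl⟩ := hk
    simpa [Set.ncard_univ] using Set.ncard_le_ncard (Set.subset_univ T) Set.finite_univ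
  · exact ⟨S, hS, rfl⟩

end Aux

/-- `n₁n₂ / gp(G □ H) ≤ χ_gp(G □ H) ≤ min (n₁ χ_gp(H)) (n₂ χ_gp(G))`. -/
theorem gpChromatic_boxProd_bounds {α β : Type*} [Fintype α] [Fintype β]
    (G : SimpleGraph α) (H : SimpleGraph β) :
    Fintype.card α * Fintype.card β ≤ gpChromatic (G □ H) * gpNumber (G □ H) ∧
      gpChromatic (G □ H) ≤
        min (Fintype.card α * gpChromatic H) (Fintype.card β * gpChromatic G) := by
  classical
  constructor
  · -- lower bound
    obtain ⟨c, hc⟩ := exists_gpColoring (G □ H)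
    have hcard : Fintype.card α * Fintype.card β =
        ∑ i : Fin (gpChromatic (G □ H)), (Finset.univ.filter fun v : α × β => c v = i).card := by
      rw [← Fintype.card_prod, ← Finset.card_univ]
      exact Finset.card_eq_sum_card_fiberwise (fun x _ => Finset.mem_univ _)
    rw [hcard]
    calc ∑ i : Fin (gpChromatic (G □ H)), (Finset.univ.filter fun v : α × β => c v = i).card
        ≤ ∑ _i : Fin (gpChromatic (G □ H)), gpNumber (G □ H) := by
          refine Finset.sum_le_sum fun i _ => ?_
          have : (Finset.univ.filter fun v : α × β => c v = i).card
              = ({v : α × β | c v = i} : Set (α × β)).ncard := by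
            rw [Set.ncard_eq_toFinset_card']
            congr 1
            ext v
            simp
          rw [this]
          exact ncard_le_gpNumber (hc i)
      _ = gpChromatic (G □ H) * gpNumber (G □ H) := by simp [Finset.sum_const, mul_comm]
  · -- upper bounds
    refine le_min ?_ ?_
    · -- card α * gpChromatic H
      obtain ⟨c, hc⟩ := exists_gpColoring H
      apply Nat.sInf_le
      refine ⟨fun p => finProdFinEquiv ((Fintype.equivFin α) p.1, c p.2), fun i => ?_⟩
      set jl := finProdFinEquiv.symm i with hjl
      refine IsGenPosSet.mono (T := {p : α × β | p.2 ∈ {b | c b = jl.2} ∧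
        p.1 = (Fintype.equivFin α).symm jl.1}) ?_ (isGenPosSet_layer_right (hc jl.2) _)
      intro p hp
      simp only [Set.mem_setOf_eq] at hp ⊢
      have : ((Fintype.equivFin α) p.1, c p.2) = jl := by
        rw [hjl, ← hp]; simp
      refine ⟨?_, ?_⟩
      · rw [← this]
      · rw [← this]; simp
    · -- card β * gpChromatic G
      obtain ⟨c, hc⟩ := exists_gpColoring G
      apply Nat.sInf_le
      refine ⟨fun p => finProdFinEquiv ((Fintype.equivFin β) p.2, c p.1), fun i => ?_⟩
      set jl := finProdFinEquiv.symm i with hjl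
      refine IsGenPosSet.mono (T := {p : α × β | p.1 ∈ {a | c a = jl.2} ∧
        p.2 = (Fintype.equivFin β).symm jl.1}) ?_ (isGenPosSet_layer_left (hc jl.2) _)
      intro p hp
      simp only [Set.mem_setOf_eq] at hp ⊢
      have : ((Fintype.equivFin β) p.2, c p.1) = jl := by
        rw [hjl, ← hp]; simp
      refine ⟨?_, ?_⟩
      · rw [← this]
      · rw [← this]; simp
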